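/- arXiv:2511.16724 — 2 statements merged into one kernel-verified Lean document; each statement's English description precedes it below -/
import Mathlib

section
/- Let V be a 5-element set and let E be the collection of all subsets of V of cardinality 3 or 4 (so |E| = 15), and let T be the collection of all subsets of V of cardinality 1 or 2 (so |T| = 15). The linear map Φ from (E → ℝ) to (T → ℝ) defined by Φ(w)(I) = Σ_{e ∈ E, e ∩ I ≠ ∅} w(e) is a linear bijection. In particular, for every assignment S : T → ℝ of prescribed cut values (the 15 independent entanglement entropies of a 5-qubit pure state) there exist unique real hyperedge weights w : E → ℝ such that for every I ∈ T the total weight of hyperedges meeting I equals S(I). -/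
/-- The 15 hyperedges: subsets of the 5-element vertex set of cardinality 3 or 4. -/
abbrev HyperEdge5 : Type := {e : Finset (Fin 5) // e.card = 3 ∨ e.card = 4}

/-- The 15 cut regions: subsets of the 5-element vertex set of cardinality 1 or 2. -/
abbrev CutRegion5 : Type := {I : Finset (Fin 5) // I.card = 1 ∨ I.card = 2}

/-- The cut-weight map: given hyperedge weights `w`, assigns to each region `I`
the total weight of hyperedges meeting `I`. -/
noncomputable def cutMap (w : HyperEdge5 → ℝ) : CutRegion5 → ℝ :=
  fun I => ∑ e : HyperEdge5, if (e.1 ∩ I.1).Nonempty then w e else 0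

lemma sum_expand (g : HyperEdge5 → ℝ) : ∑ e : HyperEdge5, g e =
    g ⟨{0,1,2}, by decide⟩ + g ⟨{0,1,3}, by decide⟩ + g ⟨{0,1,4}, by decide⟩ + g ⟨{0,2,3}, by decide⟩ + g ⟨{0,2,4}, by decide⟩ + g ⟨{0,3,4}, by decide⟩ + g ⟨{1,2,3}, by decide⟩ + g ⟨{1,2,4}, by decide⟩ + g ⟨{1,3,4}, by decide⟩ + g ⟨{2,3,4}, by decide⟩ + g ⟨{0,1,2,3}, by decide⟩ + g ⟨{0,1,2,4}, by decide⟩ + g ⟨{0,1,3,4}, by decide⟩ + g ⟨{0,2,3,4}, by decide⟩ + g ⟨{1,2,3,4}, by decide⟩ := by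
  classical
  set G : Finset (Fin 5) → ℝ := fun s => if h : s.card = 3 ∨ s.card = 4 then g ⟨s, h⟩ else 0 with hG
  have h1 : ∀ e : HyperEdge5, g e = G e.1 := by
    rintro ⟨s, hs⟩; simp [hG, hs]
  have h2 : ∑ e : HyperEdge5, g e = ∑ s ∈ ({{0,1,2},{0,1,3},{0,1,4},{0,2,3},{0,2,4},{0,3,4},{1,2,3},{1,2,4},{1,3,4},{2,3,4},{0,1,2,3},{0,1,2,4},{0,1,3,4},{0,2,3,4},{1,2,3,4}} : Finset (Finset (Fin 5))), G s := by
    rw [Finset.sum_subtype (p := fun s => s.card = 3 ∨ s.card = 4) _ (by decide) G]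
    exact Finset.sum_congr rfl fun e _ => h1 e
  rw [h2]
  repeat rw [Finset.sum_insert (by decide)]
  rw [Finset.sum_singleton]
  simp only [hG]
  repeat rw [dif_pos (by decide)]
  ring

set_option maxHeartbeats 2000000 in
lemma cutMap_zero (w : HyperEdge5 → ℝ) (h : ∀ I : CutRegion5, cutMap w I = 0) : w = 0 := by
  classical
  set W : Finset (Fin 5) → ℝ := fun s => if hs : s.card = 3 ∨ s.card = 4 then w ⟨s, hs⟩ else 0 with hW
  have hww : ∀ e : HyperEdge5, w e = W e.1 := by
    rintro ⟨s, hs⟩; simp [hW, hs]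
  have H : ∀ I : CutRegion5, (∑ e : HyperEdge5, (if (e.1 ∩ I.1).Nonempty then W e.1 else 0)) = 0 := by
    intro I
    have h0 := h I
    simp only [cutMap] at h0
    exact (Finset.sum_congr rfl fun e _ => by rw [hww e]).trans h0
  have h0 := H ⟨{0}, by decide⟩
  rw [sum_expand] at h0
  simp (config := { decide := true }) only [if_true, if_false, add_zero, zero_add] at h0
  have h1 := H ⟨{1}, by decide⟩
  rw [sum_expand] at h1
  simp (config := { decide := true }) only [if_true, if_false, add_zero, zero_add] at h1
  have h2 := H ⟨{2}, by decide⟩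
  rw [sum_expand] at h2
  simp (config := { decide := true }) only [if_true, if_false, add_zero, zero_add] at h2
  have h3 := H ⟨{3}, by decide⟩
  rw [sum_expand] at h3
  simp (config := { decide := true }) only [if_true, if_false, add_zero, zero_add] at h3
  have h4 := H ⟨{4}, by decide⟩
  rw [sum_expand] at h4
  simp (config := { decide := true }) only [if_true, if_false, add_zero, zero_add] at h4
  have h5 := H ⟨{0,1}, by decide⟩
  rw [sum_expand] at h5
  simp (config := { decide := true }) only [if_true, if_false, add_zero, zero_add] at h5
  have h6 := H ⟨{0,2}, by decide⟩
  rw [sum_expand] at h6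
  simp (config := { decide := true }) only [if_true, if_false, add_zero, zero_add] at h6
  have h7 := H ⟨{0,3}, by decide⟩
  rw [sum_expand] at h7
  simp (config := { decide := true }) only [if_true, if_false, add_zero, zero_add] at h7
  have h8 := H ⟨{0,4}, by decide⟩
  rw [sum_expand] at h8
  simp (config := { decide := true }) only [if_true, if_false, add_zero, zero_add] at h8
  have h9 := H ⟨{1,2}, by decide⟩
  rw [sum_expand] at h9
  simp (config := { decide := true }) only [if_true, if_false, add_zero, zero_add] at h9
  have h10 := H ⟨{1,3}, by decide⟩
  rw [sum_expand] at h10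
  simp (config := { decide := true }) only [if_true, if_false, add_zero, zero_add] at h10
  have h11 := H ⟨{1,4}, by decide⟩
  rw [sum_expand] at h11
  simp (config := { decide := true }) only [if_true, if_false, add_zero, zero_add] at h11
  have h12 := H ⟨{2,3}, by decide⟩
  rw [sum_expand] at h12
  simp (config := { decide := true }) only [if_true, if_false, add_zero, zero_add] at h12
  have h13 := H ⟨{2,4}, by decide⟩
  rw [sum_expand] at h13
  simp (config := { decide := true }) only [if_true, if_false, add_zero, zero_add] at h13
  have h14 := H ⟨{3,4}, by decide⟩
  rw [sum_expand] at h14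
  simp (config := { decide := true }) only [if_true, if_false, add_zero, zero_add] at h14
  funext e
  simp only [Pi.zero_apply]
  obtain ⟨s, hs⟩ := e
  have hm : s ∈ ({{0,1,2},{0,1,3},{0,1,4},{0,2,3},{0,2,4},{0,3,4},{1,2,3},{1,2,4},{1,3,4},{2,3,4},{0,1,2,3},{0,1,2,4},{0,1,3,4},{0,2,3,4},{1,2,3,4}} : Finset (Finset (Fin 5))) := by
    have h' : s ∈ Finset.univ.filter (fun t : Finset (Fin 5) => t.card = 3 ∨ t.card = 4) := by
      simpa using hs
    rwa [show (Finset.univ.filter (fun t : Finset (Fin 5) => t.card = 3 ∨ t.card = 4)) = ({{0,1,2},{0,1,3},{0,1,4},{0,2,3},{0,2,4},{0,3,4},{1,2,3},{1,2,4},{1,3,4},{2,3,4},{0,1,2,3},{0,1,2,4},{0,1,3,4},{0,2,3,4},{1,2,3,4}} : Finset (Finset (Fin 5))) from by decide] at h'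
  simp only [Finset.mem_insert, Finset.mem_singleton] at hm
  rcases hm with rfl|rfl|rfl|rfl|rfl|rfl|rfl|rfl|rfl|rfl|rfl|rfl|rfl|rfl|rfl
  · rw [hww]; show W {0,1,2} = 0; linarith
  · rw [hww]; show W {0,1,3} = 0; linarith
  · rw [hww]; show W {0,1,4} = 0; linarith
  · rw [hww]; show W {0,2,3} = 0; linarith
  · rw [hww]; show W {0,2,4} = 0; linarith
  · rw [hww]; show W {0,3,4} = 0; linarith
  · rw [hww]; show W {1,2,3} = 0; linarith
  · rw [hww]; show W {1,2,4} = 0; linarith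
  · rw [hww]; show W {1,3,4} = 0; linarith
  · rw [hww]; show W {2,3,4} = 0; linarith
  · rw [hww]; show W {0,1,2,3} = 0; linarith
  · rw [hww]; show W {0,1,2,4} = 0; linarith
  · rw [hww]; show W {0,1,3,4} = 0; linarith
  · rw [hww]; show W {0,2,3,4} = 0; linarith
  · rw [hww]; show W {1,2,3,4} = 0; linarith

noncomputable def cutLin : (HyperEdge5 → ℝ) →ₗ[ℝ] (CutRegion5 → ℝ) where
  toFun := cutMap
  map_add' w v := by
    funext I
    simp only [cutMap, Pi.add_apply]
    rw [← Finset.sum_add_distrib]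
    exact Finset.sum_congr rfl fun e _ => by split <;> simp
  map_smul' a w := by
    funext I
    simp only [cutMap, Pi.smul_apply, RingHom.id_apply, smul_eq_mul]
    rw [Finset.mul_sum]
    exact Finset.sum_congr rfl fun e _ => by split <;> simp

def complEquiv : HyperEdge5 ≃ CutRegion5 where
  toFun e := ⟨e.1ᶜ, by rcases e.2 with h | h <;> simp [Finset.card_compl, h]⟩
  invFun I := ⟨I.1ᶜ, by rcases I.2 with h | h <;> simp [Finset.card_compl, h]⟩
  left_inv e := Subtype.ext (by simp)
  right_inv I := Subtype.ext (by simp)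

lemma cutMap_bij : Function.Bijective cutMap := by
  have hinj : Function.Injective cutLin := by
    rw [← LinearMap.ker_eq_bot, LinearMap.ker_eq_bot']
    exact fun w hw => cutMap_zero w (fun I => congrFun hw I)
  have hFinj : Function.Injective
      ((LinearEquiv.funCongrLeft ℝ ℝ complEquiv).toLinearMap.comp cutLin) :=
    (LinearEquiv.funCongrLeft ℝ ℝ complEquiv).injective.comp hinj
  have hFsurj := LinearMap.injective_iff_surjective.mp hFinj
  refine ⟨hinj, fun S => ?_⟩
  obtain ⟨w, hw⟩ := hFsurj ((LinearEquiv.funCongrLeft ℝ ℝ complEquiv) S)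
  exact ⟨w, (LinearEquiv.funCongrLeft ℝ ℝ complEquiv).injective hw⟩

theorem cutMap_linear_bijective :
    Function.Bijective cutMap ∧
    (∀ (a b : ℝ) (w v : HyperEdge5 → ℝ),
      cutMap (a • w + b • v) = a • cutMap w + b • cutMap v) ∧
    ∀ S : CutRegion5 → ℝ, ∃! w : HyperEdge5 → ℝ,
      ∀ I : CutRegion5,
        (∑ e : HyperEdge5, if (e.1 ∩ I.1).Nonempty then w e else 0) = S I := by
  refine ⟨cutMap_bij, ?_, ?_⟩
  · intro a b w v
    show cutLin (a • w + b • v) = a • cutLin w + b • cutLin v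
    rw [map_add, map_smul, map_smul]
  · intro S
    obtain ⟨w, hw⟩ := cutMap_bij.surjective S
    refine ⟨w, fun I => congrFun hw I, fun v hv => ?_⟩
    apply cutMap_bij.injective
    rw [hw]
    funext I
    exact hv I
end

section
/- Let V be a 5-element set, let E be the collection of all 15 subsets of V of cardinality 3 or 4, and let T be the collection of all 15 subsets of V of cardinality 1 or 2. The 15 × 15 matrix M over ℝ, with rows indexed by T and columns indexed by E, whose (I, e) entry is 1 if e ∩ I ≠ ∅ and 0 otherwise, is invertible (equivalently, det M ≠ 0). -/
/-- The 15 × 15 incidence matrix, rows indexed by the regions `T` and columns by the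
hyperedges `E`, whose (I, e) entry is 1 if the hyperedge e meets the region I and
0 otherwise. -/
def incidenceM : Matrix CutRegion5 HyperEdge5 ℝ :=
  Matrix.of fun I e => if (e.1 ∩ I.1).Nonempty then (1 : ℝ) else 0

/-- Integer version of the incidence matrix. -/
def Mz : Matrix CutRegion5 HyperEdge5 ℤ :=
  Matrix.of fun I e => if (e.1 ∩ I.1).Nonempty then (1 : ℤ) else 0

/-- Six times the inverse of the incidence matrix, over ℤ. -/
def B6 : Matrix HyperEdge5 CutRegion5 ℤ :=
  Matrix.of fun e I =>
    if e.1.card = 3 then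
      if I.1.card = 1 then -1
      else if (e.1 ∩ I.1).card = 0 then -5 else 1
    else
      if I.1.card = 1 then (if (e.1 ∩ I.1).card = 1 then 3 else -3)
      else (if (e.1 ∩ I.1).card = 2 then -3 else 3)

set_option maxRecDepth 100000 in
lemma Mz_mul_B6 : Mz * B6 = (6 : ℤ) • 1 := by decide

set_option maxRecDepth 100000 in
lemma B6_mul_Mz : B6 * Mz = (6 : ℤ) • 1 := by decide

/-- Real inverse of the incidence matrix. -/
noncomputable def Binv : Matrix HyperEdge5 CutRegion5 ℝ :=
  ((6 : ℝ)⁻¹) • (B6.map (Int.cast : ℤ → ℝ))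

lemma incidenceM_eq_map : incidenceM = Mz.map (Int.cast : ℤ → ℝ) := by
  ext I e
  simp only [incidenceM, Mz, Matrix.map_apply, Matrix.of_apply]
  split <;> simp

lemma incidenceM_mul_Binv : incidenceM * Binv = 1 := by
  have h : (Mz.map (Int.cast : ℤ → ℝ)) * (B6.map (Int.cast : ℤ → ℝ))
      = (((6 : ℤ) • 1 : Matrix CutRegion5 CutRegion5 ℤ).map (Int.cast : ℤ → ℝ)) := by
    rw [← Mz_mul_B6]; exact (Matrix.map_mul (L := Mz) (M := B6) (f := Int.castRingHom ℝ)).symm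
  rw [incidenceM_eq_map, Binv, Matrix.mul_smul, h]
  ext i j
  simp only [Matrix.smul_apply, Matrix.map_apply, Matrix.one_apply, smul_eq_mul]
  split <;> simp

lemma Binv_mul_incidenceM : Binv * incidenceM = 1 := by
  have h : (B6.map (Int.cast : ℤ → ℝ)) * (Mz.map (Int.cast : ℤ → ℝ))
      = (((6 : ℤ) • 1 : Matrix HyperEdge5 HyperEdge5 ℤ).map (Int.cast : ℤ → ℝ)) := by
    rw [← B6_mul_Mz]; exact (Matrix.map_mul (L := B6) (M := Mz) (f := Int.castRingHom ℝ)).symm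
  rw [incidenceM_eq_map, Binv, Matrix.smul_mul, h]
  ext i j
  simp only [Matrix.smul_apply, Matrix.map_apply, Matrix.one_apply, smul_eq_mul]
  split <;> simp

/-- The incidence matrix is invertible: as a linear map it is a bijection, and
(equivalently) identifying the row and column index sets by any bijection, its
determinant is nonzero. -/
theorem incidenceM_invertible :
    Function.Bijective incidenceM.mulVecLin ∧
    ∀ σ : CutRegion5 ≃ HyperEdge5, (incidenceM.submatrix id σ).det ≠ 0 := by
  constructor
  · refine Function.bijective_iff_has_inverse.2 ⟨Binv.mulVecLin, fun v => ?_, fun v => ?_⟩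
    · show Binv.mulVec (incidenceM.mulVec v) = v
      rw [Matrix.mulVec_mulVec, Binv_mul_incidenceM, Matrix.one_mulVec]
    · show incidenceM.mulVec (Binv.mulVec v) = v
      rw [Matrix.mulVec_mulVec, incidenceM_mul_Binv, Matrix.one_mulVec]
  · intro σ
    apply Matrix.det_ne_zero_of_right_inverse (B := Binv.submatrix σ id)
    rw [Matrix.submatrix_mul_equiv, incidenceM_mul_Binv, Matrix.submatrix_id_id]
end
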